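/- (Dressing of a matrix operator by normalized Yang R-matrices on the vacuum.) Let d ≥ 2, m ≥ 1, and let Ṙ(u) = (u/(u−1))(I − P/u) be the normalized Yang R-matrix on ℂ^d ⊗ ℂ^d, with P the permutation operator. Let A(v) be a d×d matrix with entries in 𝒜 ⊗ ℂ(v, u₁, …, u_m, ρ) whose first column vanishes below the (1,1) entry: [A(v)]_{1+i,1} = 0 for 1 ≤ i ≤ d−1. On V_a ⊗ W, where V_a ≅ ℂ^d and W = V_{b₁} ⊗ ⋯ ⊗ V_{b_m} with each V_{b_i} ≅ ℂ^d, set A_{ab}(v; u) := ( ∏_{i=1}^{m} Ṙ_{a b_i}(v + u_i + ρ) ) A_a(v) ( ∏_{i=m}^{1} Ṙ_{a b_i}(v − u_i) ), with A_a acting as A(v) on V_a and as the identity on W, and the products ordered as indicated. Let ξ = e₁^{⊗m} ∈ W and Λ⁻(v) = ∏_{i=1}^m ((v+u_i−1+ρ)(v−u_i−1))/((v+u_i+ρ)(v−u_i)). Then, regarding the matrix entries of A_{ab}(v;u) as operators on W with coefficients in 𝒜 ⊗ ℂ(v, u₁,…,u_m, ρ): [A_{ab}(v;u)]_{11} ξ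 = [A(v)]_{11} ξ; [A_{ab}(v;u)]_{1+i,1} ξ = 0; and [A_{ab}(v;u)]_{1+i,1+j} ξ = (1/Λ⁻(v)) · ( [A(v)]_{1+i,1+j} + δ_{ij} ((1 − Λ⁻(v))/(2v−1+ρ)) [A(v)]_{11} ) ξ, for all 1 ≤ i, j ≤ d−1. -/

import Mathlib

open Matrix
open scoped BigOperators

noncomputable section

section Defs

variable (d m : ℕ) {A : Type*} [Ring A] [Algebra ℂ A]

/-- permutation operator `P` on `ℂ^d ⊗ ℂ^d` -/
def PdA : Matrix (Fin d × Fin d) (Fin d × Fin d) A :=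
  Matrix.of fun p q => if p.1 = q.2 ∧ p.2 = q.1 then 1 else 0

/-- the normalized Yang R-matrix `Ṙ(w) = (w/(w-1))(I - P/w)` -/
def RnormA (w : ℂ) : Matrix (Fin d × Fin d) (Fin d × Fin d) A :=
  (w / (w - 1)) • ((1 : Matrix (Fin d × Fin d) (Fin d × Fin d) A) - w⁻¹ • PdA d)

/-- single-site operator `A_a` on `V_a ⊗ W` -/
def onAW (M : Matrix (Fin d) (Fin d) A) :
    Matrix (Fin d × (Fin m → Fin d)) (Fin d × (Fin m → Fin d)) A :=
  Matrix.of fun p q => M p.1 q.1 * (if p.2 = q.2 then 1 else 0)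

/-- two-site operator acting on the factors `(a, b_i)` of `V_a ⊗ W` -/
def onRW (i : Fin m) (M : Matrix (Fin d × Fin d) (Fin d × Fin d) A) :
    Matrix (Fin d × (Fin m → Fin d)) (Fin d × (Fin m → Fin d)) A :=
  Matrix.of fun p q =>
    M (p.1, p.2 i) (q.1, q.2 i) * (if ∀ j, j ≠ i → p.2 j = q.2 j then 1 else 0)

/-- the dressed matrix
`A_{ab}(v;u) = (∏ᵢ Ṙ_{a bᵢ}(v+uᵢ+ρ)) A_a(v) (∏ᵢ (reversed) Ṙ_{a bᵢ}(v-uᵢ))` -/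
def dressed (ρ : ℂ) (Am : ℂ → Matrix (Fin d) (Fin d) A) (v : ℂ) (u : Fin m → ℂ) :
    Matrix (Fin d × (Fin m → Fin d)) (Fin d × (Fin m → Fin d)) A :=
  ((List.finRange m).map fun i => onRW d m i (RnormA d (v + u i + ρ))).prod *
  onAW d m (Am v) *
  ((List.finRange m).reverse.map fun i => onRW d m i (RnormA d (v - u i))).prod

/-- the `(k,l)` entry of the dressed matrix, regarded as an operator on `W` -/
def entryOp (ρ : ℂ) (Am : ℂ → Matrix (Fin d) (Fin d) A) (v : ℂ) (u : Fin m → ℂ)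
    (k l : Fin d) : Matrix (Fin m → Fin d) (Fin m → Fin d) A :=
  Matrix.of fun p q => dressed d m ρ Am v u (k, p) (l, q)

end Defs

section Proof

variable {d m : ℕ} {A : Type*} [Ring A] [Algebra ℂ A]

/-- standard basis vector -/
def eb (x : Fin d × (Fin m → Fin d)) : (Fin d × (Fin m → Fin d)) → A :=
  fun p => if p = x then 1 else 0

/-- right multiplication of a vector by a coefficient -/
def rmul (X : (Fin d × (Fin m → Fin d)) → A) (a : A) : (Fin d × (Fin m → Fin d)) → A :=
  fun p => X p * a

lemma mulVec_eb (M : Matrix (Fin d × (Fin m → Fin d)) (Fin d × (Fin m → Fin d)) A)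
    (x : Fin d × (Fin m → Fin d)) : M.mulVec (eb x) = fun p => M p x := by
  funext p
  simp only [Matrix.mulVec, dotProduct, eb, mul_ite, mul_one, mul_zero]
  exact Finset.sum_ite_eq' _ _ _ |>.trans (by simp)

lemma mulVec_rmul (M : Matrix (Fin d × (Fin m → Fin d)) (Fin d × (Fin m → Fin d)) A)
    (X : (Fin d × (Fin m → Fin d)) → A) (a : A) :
    M.mulVec (rmul X a) = rmul (M.mulVec X) a := by
  funext p
  simp only [Matrix.mulVec, dotProduct, rmul, Finset.sum_mul, mul_assoc]

lemma sum_rmul_eb (X : (Fin d × (Fin m → Fin d)) → A) :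
    ∑ x : Fin d × (Fin m → Fin d), rmul (eb x) (X x) = X := by
  funext p
  simp only [Finset.sum_apply, rmul, eb, ite_mul, one_mul, zero_mul]
  exact Finset.sum_ite_eq _ _ _ |>.trans (by simp)

lemma mulVec_eq_sum (M : Matrix (Fin d × (Fin m → Fin d)) (Fin d × (Fin m → Fin d)) A)
    (X : (Fin d × (Fin m → Fin d)) → A) :
    M.mulVec X = ∑ x : Fin d × (Fin m → Fin d), rmul (M.mulVec (eb x)) (X x) := by
  funext p
  simp only [Finset.sum_apply, rmul, mulVec_eb]
  rfl

set_option linter.unusedSectionVars false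

lemma Rstep (w : ℂ) (hw0 : w ≠ 0) (hw1 : w - 1 ≠ 0) (i : Fin m) (k : Fin d)
    (f : Fin m → Fin d) :
    (onRW d m i (RnormA d w)).mulVec (eb (k, f)) =
      (w / (w - 1)) • eb (A := A) (k, f)
        - (w - 1)⁻¹ • eb (f i, Function.update f i k) := by
  have key : w / (w - 1) * w⁻¹ = (w - 1)⁻¹ := by field_simp
  rw [mulVec_eb]
  funext p
  obtain ⟨q, g⟩ := p
  simp only [onRW, RnormA, PdA, Matrix.of_apply, Matrix.smul_apply, Matrix.sub_apply,
    Matrix.one_apply, Pi.sub_apply, Pi.smul_apply, eb, Prod.mk.injEq]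
  by_cases hoff : ∀ j, j ≠ i → g j = f j
  · have hgf : (g = f) ↔ (g i = f i) :=
      ⟨fun h => by rw [h], fun h => funext fun j => by
        by_cases hj : j = i
        · subst hj; exact h
        · exact hoff j hj⟩
    have hgu : (g = Function.update f i k) ↔ (g i = k) := by
      rw [Function.eq_update_iff]
      exact ⟨fun h => h.1, fun h => ⟨h, fun x hx => hoff x hx⟩⟩
    simp only [hgf, hgu]
    rw [if_pos hoff, mul_one]
    by_cases h1 : q = k ∧ g i = f i <;> by_cases h2 : q = f i ∧ g i = k
    · rw [if_pos h1, if_pos h2]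
      rw [smul_sub, smul_smul, key]
    · rw [if_pos h1, if_neg h2]
      simp
    · rw [if_neg h1, if_pos h2]
      simp [smul_smul, key]
    · rw [if_neg h1, if_neg h2]
      simp
  · rw [if_neg hoff, mul_zero]
    rw [if_neg (by
      rintro ⟨rfl, rfl⟩
      exact hoff fun j hj => rfl)]
    rw [if_neg (by
      rintro ⟨rfl, rfl⟩
      exact hoff fun j hj => Function.update_of_ne hj _ _)]
    simp

lemma Rstep_fix (w : ℂ) (hw0 : w ≠ 0) (hw1 : w - 1 ≠ 0) (i : Fin m) (k : Fin d)
    (f : Fin m → Fin d) (h : f i = k) :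
    (onRW d m i (RnormA d w)).mulVec (eb (A := A) (k, f)) = eb (k, f) := by
  rw [Rstep w hw0 hw1 i k f, h]
  rw [show Function.update f i k = f by rw [← h]; exact Function.update_eq_self i f]
  rw [← sub_smul, show w / (w - 1) - (w - 1)⁻¹ = 1 by field_simp, one_smul]

def Rop (w : Fin m → ℂ) (i : Fin m) :
    Matrix (Fin d × (Fin m → Fin d)) (Fin d × (Fin m → Fin d)) A :=
  onRW d m i (RnormA d (w i))

def Pl (w : Fin m → ℂ) (l : List (Fin m)) :
    Matrix (Fin d × (Fin m → Fin d)) (Fin d × (Fin m → Fin d)) A :=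
  (l.map (Rop w)).prod

lemma Pl_nil (w : Fin m → ℂ) : Pl (A := A) (d := d) w [] = 1 := rfl

lemma Pl_cons (w : Fin m → ℂ) (a : Fin m) (t : List (Fin m)) :
    Pl (A := A) (d := d) w (a :: t) = Rop w a * Pl w t := by
  simp [Pl, List.prod_cons]

lemma Pl_rev_cons (w : Fin m → ℂ) (a : Fin m) (t : List (Fin m)) :
    Pl (A := A) (d := d) w ((a :: t).reverse) = Pl w t.reverse * Rop w a := by
  simp [Pl, List.prod_append]

lemma supp_rmul_eb (x : Fin d × (Fin m → Fin d)) (c : A) (p : Fin d × (Fin m → Fin d))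
    (h : rmul (eb x) c p ≠ 0) : p = x := by
  by_contra hc
  exact h (by simp [rmul, eb, hc])

lemma Rop_fix_of_supp (w : Fin m → ℂ) (a : Fin m) (hw0 : w a ≠ 0) (hw1 : w a - 1 ≠ 0)
    (z : Fin d) (E : (Fin d × (Fin m → Fin d)) → A)
    (hE : ∀ q g, E (q, g) ≠ 0 → q = z ∧ g a = z) :
    (Rop (A := A) w a).mulVec E = E := by
  have key : ∀ x : Fin d × (Fin m → Fin d),
      rmul ((Rop (A := A) w a).mulVec (eb x)) (E x) = rmul (eb x) (E x) := by
    rintro ⟨q, g⟩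
    by_cases h : E (q, g) = 0
    · funext p; simp [rmul, h]
    · obtain ⟨hq, hg⟩ := hE q g h
      subst hq
      rw [show Rop (A := A) w a = onRW d m a (RnormA d (w a)) from rfl,
        Rstep_fix (w a) hw0 hw1 a q g hg]
  rw [_root_.mulVec_eq_sum, Finset.sum_congr rfl fun x _ => key x, sum_rmul_eb]

lemma Pl_fix_of_supp (w : Fin m → ℂ) (l : List (Fin m))
    (hw : ∀ i ∈ l, w i ≠ 0 ∧ w i - 1 ≠ 0)
    (z : Fin d) (E : (Fin d × (Fin m → Fin d)) → A)
    (hE : ∀ q g, E (q, g) ≠ 0 → q = z ∧ ∀ a ∈ l, g a = z) :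
    (Pl (A := A) w l).mulVec E = E := by
  induction l with
  | nil => rw [Pl_nil, Matrix.one_mulVec]
  | cons a t ih =>
    rw [Pl_cons, ← Matrix.mulVec_mulVec]
    rw [ih (fun i hi => hw i (List.mem_cons_of_mem a hi))
      (fun q g h => ⟨(hE q g h).1, fun i hi => (hE q g h).2 i (List.mem_cons_of_mem a hi)⟩)]
    exact Rop_fix_of_supp w a (hw a (List.mem_cons_self)).1 (hw a (List.mem_cons_self)).2
      z E (fun q g h => ⟨(hE q g h).1, (hE q g h).2 a (List.mem_cons_self)⟩)

lemma mulVec_finset_sum {ι : Type*} (s : Finset ι)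
    (M : Matrix (Fin d × (Fin m → Fin d)) (Fin d × (Fin m → Fin d)) A)
    (f : ι → (Fin d × (Fin m → Fin d)) → A) :
    M.mulVec (∑ i ∈ s, f i) = ∑ i ∈ s, M.mulVec (f i) := by
  funext p
  simp only [Matrix.mulVec, dotProduct, Finset.sum_apply, Finset.mul_sum]
  exact Finset.sum_comm

lemma rmul_sub (X Y : (Fin d × (Fin m → Fin d)) → A) (c : A) :
    rmul (X - Y) c = rmul X c - rmul Y c := by
  funext p; simp [rmul, sub_mul]

lemma rmul_smul (r : ℂ) (X : (Fin d × (Fin m → Fin d)) → A) (c : A) :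
    rmul (r • X) c = r • rmul X c := by
  funext p; simp [rmul, smul_mul_assoc]

lemma Aa_vac (M : Matrix (Fin d) (Fin d) A) (z : Fin d) (hA : ∀ i, i ≠ z → M i z = 0)
    (f : Fin m → Fin d) :
    (onAW d m M).mulVec (eb (z, f)) = rmul (eb (z, f)) (M z z) := by
  rw [mulVec_eb]
  funext p
  obtain ⟨q, g⟩ := p
  simp only [onAW, Matrix.of_apply, rmul, eb, Prod.mk.injEq]
  by_cases hq : q = z
  · subst hq
    by_cases hg : g = f <;> simp [hg]
  · simp [hA q hq, hq]

lemma Aa_vec (M : Matrix (Fin d) (Fin d) A) (z j : Fin d) (f : Fin m → Fin d) :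
    (onAW d m M).mulVec (eb (j, f)) =
      (∑ k ∈ Finset.univ \ {z}, rmul (eb (k, f)) (M k j)) + rmul (eb (z, f)) (M z j) := by
  rw [mulVec_eb]
  funext p
  obtain ⟨q, g⟩ := p
  simp only [onAW, Matrix.of_apply, Pi.add_apply, Finset.sum_apply, rmul, eb, Prod.mk.injEq]
  by_cases hg : g = f
  · subst hg
    by_cases hq : q = z
    · subst hq
      rw [Finset.sum_eq_zero (fun k hk => by
        simp only [Finset.mem_sdiff, Finset.mem_singleton] at hk
        simp [Ne.symm hk.2])]
      simp
    · rw [Finset.sum_eq_single_of_mem q (by simp [hq])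
        (fun k _ hk => by simp [Ne.symm hk])]
      simp [hq]
  · simp [hg]

def aprod (w : Fin m → ℂ) (l : List (Fin m)) : ℂ :=
  (l.map fun i => w i / (w i - 1)).prod

lemma aprod_nil (w : Fin m → ℂ) : aprod w [] = 1 := rfl

lemma aprod_cons (w : Fin m → ℂ) (a : Fin m) (t : List (Fin m)) :
    aprod w (a :: t) = (w a / (w a - 1)) * aprod w t := by
  simp [aprod]

def Sc (w w' : Fin m → ℂ) : List (Fin m) → ℂ
  | [] => 0
  | a :: t => (w a / (w a - 1)) * (w' a / (w' a - 1)) * Sc w w' t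
      + (w a - 1)⁻¹ * (w' a - 1)⁻¹

lemma master (z j : Fin d) (hj : j ≠ z) (M : Matrix (Fin d) (Fin d) A)
    (hA : ∀ i, i ≠ z → M i z = 0) (w w' : Fin m → ℂ) (l : List (Fin m)) (hnd : l.Nodup)
    (hw : ∀ i ∈ l, w i ≠ 0 ∧ w i - 1 ≠ 0 ∧ w' i ≠ 0 ∧ w' i - 1 ≠ 0) :
    ∃ E : (Fin d × (Fin m → Fin d)) → A,
      (∀ q g, E (q, g) ≠ 0 → q = z ∧ ∀ a, a ∉ l → g a = z) ∧
      (Pl w' l * onAW d m M * Pl w l.reverse).mulVec (eb (j, fun _ => z)) =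
        (aprod w l * aprod w' l) •
            (∑ k ∈ Finset.univ \ {z}, rmul (eb (k, fun _ => z)) (M k j))
          + aprod w l • rmul (eb (z, fun _ => z)) (M z j)
          + Sc w w' l • rmul (eb (j, fun _ => z)) (M z z)
          + E := by
  induction l with
  | nil =>
    refine ⟨0, by simp, ?_⟩
    rw [Pl_nil, List.reverse_nil, Pl_nil, one_mul, mul_one]
    rw [Aa_vec M z j]
    simp [aprod_nil, Sc]
  | cons a t ih =>
    have ha : a ∉ t := (List.nodup_cons.mp hnd).1
    have hndt : t.Nodup := (List.nodup_cons.mp hnd).2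
    have hwa := hw a (List.mem_cons_self)
    obtain ⟨E, hEs, hE⟩ := ih hndt (fun i hi => hw i (List.mem_cons_of_mem a hi))
    -- notation
    set ξ : Fin m → Fin d := (fun _ => z) with hξ
    set T : (Fin d × (Fin m → Fin d)) → A :=
      ∑ k ∈ Finset.univ \ {z}, rmul (eb (k, ξ)) (M k j) with hT
    set U : (Fin d × (Fin m → Fin d)) → A :=
      ∑ k ∈ Finset.univ \ {z}, rmul (eb (z, Function.update ξ a k)) (M k j) with hU
    set V0 : (Fin d × (Fin m → Fin d)) → A := rmul (eb (z, ξ)) (M z j) with hV0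
    set V1 : (Fin d × (Fin m → Fin d)) → A := rmul (eb (j, ξ)) (M z z) with hV1
    set V2 : (Fin d × (Fin m → Fin d)) → A :=
      rmul (eb (z, Function.update ξ a j)) (M z z) with hV2
    have hlift : ∀ (X : (Fin d × (Fin m → Fin d)) → A) (b : ℂ),
        True := fun _ _ => trivial
    have hfac : (Pl (A := A) w' (a :: t) * onAW d m M * Pl w (a :: t).reverse) =
        Rop w' a * ((Pl w' t * onAW d m M * Pl w t.reverse) * Rop w a) := by
      rw [Pl_cons, Pl_rev_cons]
      simp only [mul_assoc]
    have hRw : Rop (A := A) w a = onRW d m a (RnormA d (w a)) := rfl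
    have hRw' : Rop (A := A) w' a = onRW d m a (RnormA d (w' a)) := rfl
    have hstep1 : (Rop (A := A) w a).mulVec (eb (j, ξ)) =
        (w a / (w a - 1)) • eb (j, ξ) - (w a - 1)⁻¹ • eb (z, Function.update ξ a j) := by
      rw [hRw, Rstep (w a) hwa.1 hwa.2.1 a j ξ]
    have hfix : ∀ (ww : Fin m → ℂ), (∀ i ∈ t, ww i ≠ 0 ∧ ww i - 1 ≠ 0) →
        ∀ (lt : List (Fin m)), (∀ i, i ∈ lt ↔ i ∈ t) →
        (Pl (A := A) ww lt).mulVec (eb (z, Function.update ξ a j)) =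
          eb (z, Function.update ξ a j) := by
      intro ww hww lt hlt
      apply Pl_fix_of_supp ww lt (fun i hi => hww i ((hlt i).mp hi)) z
      intro q g hne
      have hx : (q, g) = (z, Function.update ξ a j) := by
        by_contra hc
        exact hne (by simp [eb, hc])
      simp only [Prod.mk.injEq] at hx
      obtain ⟨h1, h2⟩ := hx
      refine ⟨h1, fun i hi => ?_⟩
      rw [h2, Function.update_of_ne (by
        intro hh; rw [hh] at hi; exact ha ((hlt a).mp hi))]
    have hstep2 : (Pl (A := A) w' t * onAW d m M * Pl w t.reverse).mulVec
        (eb (z, Function.update ξ a j)) = V2 := by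
      rw [mul_assoc, ← Matrix.mulVec_mulVec, ← Matrix.mulVec_mulVec,
        hfix w (fun i hi => ⟨(hw i (List.mem_cons_of_mem a hi)).1,
          (hw i (List.mem_cons_of_mem a hi)).2.1⟩) t.reverse (fun i => List.mem_reverse),
        Aa_vac M z hA, mulVec_rmul,
        hfix w' (fun i hi => ⟨(hw i (List.mem_cons_of_mem a hi)).2.2.1,
          (hw i (List.mem_cons_of_mem a hi)).2.2.2⟩) t (fun i => Iff.rfl), hV2]
    have hT' : (Rop (A := A) w' a).mulVec T =
        (w' a / (w' a - 1)) • T - (w' a - 1)⁻¹ • U := by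
      have hterm : ∀ k ∈ Finset.univ \ {z},
          (Rop (A := A) w' a).mulVec (rmul (eb (k, ξ)) (M k j)) =
            (w' a / (w' a - 1)) • rmul (eb (k, ξ)) (M k j)
              - (w' a - 1)⁻¹ • rmul (eb (z, Function.update ξ a k)) (M k j) := by
        intro k _
        rw [mulVec_rmul, hRw', Rstep (w' a) hwa.2.2.1 hwa.2.2.2 a k ξ, rmul_sub,
          rmul_smul, rmul_smul]
      rw [hT, hU, mulVec_finset_sum, Finset.sum_congr rfl hterm, Finset.sum_sub_distrib,
        Finset.smul_sum, Finset.smul_sum]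
    have hV0' : (Rop (A := A) w' a).mulVec V0 = V0 := by
      apply Rop_fix_of_supp w' a hwa.2.2.1 hwa.2.2.2 z
      intro q g hne
      have hx := supp_rmul_eb _ _ _ hne
      simp only [Prod.mk.injEq] at hx
      exact ⟨hx.1, by rw [hx.2]⟩
    have hV1' : (Rop (A := A) w' a).mulVec V1 =
        (w' a / (w' a - 1)) • V1 - (w' a - 1)⁻¹ • V2 := by
      rw [hV1, hV2, mulVec_rmul, hRw', Rstep (w' a) hwa.2.2.1 hwa.2.2.2 a j ξ, rmul_sub,
        rmul_smul, rmul_smul]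
    have hV2' : (Rop (A := A) w' a).mulVec V2 =
        (w' a / (w' a - 1)) • V2 - (w' a - 1)⁻¹ • V1 := by
      rw [hV2, mulVec_rmul, hRw',
        Rstep (w' a) hwa.2.2.1 hwa.2.2.2 a z (Function.update ξ a j), rmul_sub,
        rmul_smul, rmul_smul, Function.update_self, Function.update_idem,
        show Function.update ξ a z = ξ from Function.update_eq_self a ξ, hV1]
    have hEfix : (Rop (A := A) w' a).mulVec E = E := by
      apply Rop_fix_of_supp w' a hwa.2.2.1 hwa.2.2.2 z
      intro q g hne
      exact ⟨(hEs q g hne).1, (hEs q g hne).2 a ha⟩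
    refine ⟨(-(w a / (w a - 1) * (aprod w t * aprod w' t) * (w' a - 1)⁻¹)) • U
        + (-(w a / (w a - 1) * Sc w w' t * (w' a - 1)⁻¹)
            - (w a - 1)⁻¹ * (w' a / (w' a - 1))) • V2
        + (w a / (w a - 1)) • E, ?_, ?_⟩
    · intro q g hne
      simp only [Pi.add_apply, Pi.smul_apply] at hne
      have h3 : U (q, g) ≠ 0 ∨ V2 (q, g) ≠ 0 ∨ E (q, g) ≠ 0 := by
        by_contra hc
        push_neg at hc
        obtain ⟨h1, h2, h3⟩ := hc
        rw [h1, h2, h3, smul_zero, smul_zero, smul_zero, add_zero, add_zero] at hne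
        exact hne rfl
      have hupd : ∀ k : Fin d, (q, g) = (z, Function.update ξ a k) →
          q = z ∧ ∀ a', a' ∉ a :: t → g a' = z := by
        intro k hx
        simp only [Prod.mk.injEq] at hx
        obtain ⟨h1, h2⟩ := hx
        refine ⟨h1, fun a' ha' => ?_⟩
        rw [h2, Function.update_of_ne (by
          intro hh; rw [hh] at ha'; exact ha' (List.mem_cons_self))]
      obtain h | h | h := h3
      · rw [hU, Finset.sum_apply] at h
        obtain ⟨k, _, hkne⟩ := Finset.exists_ne_zero_of_sum_ne_zero h
        exact hupd k (supp_rmul_eb _ _ _ hkne)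
      · rw [hV2] at h
        exact hupd j (supp_rmul_eb _ _ _ h)
      · exact ⟨(hEs q g h).1, fun a' ha' =>
          (hEs q g h).2 a' (fun hm => ha' (List.mem_cons_of_mem a hm))⟩
    · rw [hfac, ← Matrix.mulVec_mulVec, ← Matrix.mulVec_mulVec, hstep1,
        Matrix.mulVec_sub, Matrix.mulVec_smul, Matrix.mulVec_smul, hE, hstep2]
      simp only [Matrix.mulVec_sub, Matrix.mulVec_add, Matrix.mulVec_smul]
      rw [hT', hV0', hV1', hV2', hEfix]
      simp only [aprod_cons, Sc]
      module

lemma master_vac (z : Fin d) (M : Matrix (Fin d) (Fin d) A)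
    (hA : ∀ i, i ≠ z → M i z = 0) (w w' : Fin m → ℂ) (l : List (Fin m))
    (hw : ∀ i ∈ l, w i ≠ 0 ∧ w i - 1 ≠ 0 ∧ w' i ≠ 0 ∧ w' i - 1 ≠ 0) :
    (Pl w' l * onAW d m M * Pl w l.reverse).mulVec (eb (z, fun _ => z)) =
      rmul (eb (z, fun _ => z)) (M z z) := by
  have fix1 : (Pl (A := A) w l.reverse).mulVec (eb (z, fun _ => z)) =
      eb (z, fun _ => z) := by
    apply Pl_fix_of_supp w l.reverse
      (fun i hi => ⟨(hw i (List.mem_reverse.mp hi)).1, (hw i (List.mem_reverse.mp hi)).2.1⟩) z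
    intro q g h
    have hx : (q, g) = (z, fun _ => z) := by
      by_contra hc; exact h (by simp [eb, hc])
    simp only [Prod.mk.injEq] at hx
    exact ⟨hx.1, fun a _ => by rw [hx.2]⟩
  have fix2 : (Pl (A := A) w' l).mulVec (eb (z, fun _ => z)) =
      eb (z, fun _ => z) := by
    apply Pl_fix_of_supp w' l (fun i hi => ⟨(hw i hi).2.2.1, (hw i hi).2.2.2⟩) z
    intro q g h
    have hx : (q, g) = (z, fun _ => z) := by
      by_contra hc; exact h (by simp [eb, hc])
    simp only [Prod.mk.injEq] at hx
    exact ⟨hx.1, fun a _ => by rw [hx.2]⟩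
  rw [mul_assoc, ← Matrix.mulVec_mulVec, ← Matrix.mulVec_mulVec, fix1, Aa_vac M z hA,
    mulVec_rmul, fix2]

lemma Sc_eq (c : ℂ) (w w' : Fin m → ℂ) : ∀ l : List (Fin m),
    (∀ i ∈ l, w i - 1 ≠ 0 ∧ w' i - 1 ≠ 0 ∧ w i + w' i - 1 = c) →
    Sc w w' l * c = aprod w l * aprod w' l - 1
  | [], _ => by simp [Sc, aprod_nil]
  | a :: t, h => by
    obtain ⟨ha1, ha2, ha3⟩ := h a (List.mem_cons_self)
    have iht := Sc_eq c w w' t (fun i hi => h i (List.mem_cons_of_mem a hi))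
    have hkey : (w a - 1)⁻¹ * (w' a - 1)⁻¹ * c =
        w a / (w a - 1) * (w' a / (w' a - 1)) - 1 := by
      rw [← ha3]
      field_simp
      ring
    simp only [Sc, aprod_cons]
    calc (w a / (w a - 1) * (w' a / (w' a - 1)) * Sc w w' t
          + (w a - 1)⁻¹ * (w' a - 1)⁻¹) * c
        = w a / (w a - 1) * (w' a / (w' a - 1)) * (Sc w w' t * c)
          + (w a - 1)⁻¹ * (w' a - 1)⁻¹ * c := by ring
      _ = _ := by rw [iht, hkey]; ring

lemma entry_eq (ρ : ℂ) (Am : ℂ → Matrix (Fin d) (Fin d) A) (v : ℂ) (u : Fin m → ℂ)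
    (k l : Fin d) (z : Fin d) :
    (entryOp d m ρ Am v u k l).mulVec
        (fun p => if p = (fun _ => z) then (1 : A) else 0)
      = fun p => (dressed d m ρ Am v u).mulVec (eb (l, fun _ => z)) (k, p) := by
  funext p
  rw [mulVec_eb]
  simp only [entryOp, Matrix.mulVec, dotProduct, Matrix.of_apply, mul_ite, mul_one,
    mul_zero, eb]
  rw [show (∑ q : Fin m → Fin d, if q = (fun _ => z) then
      dressed d m ρ Am v u (k, p) (l, q) else 0)
    = _ from Finset.sum_ite_eq' Finset.univ (fun _ => z)
        (fun q => dressed d m ρ Am v u (k, p) (l, q))]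
  simp

lemma dressed_eq (ρ : ℂ) (Am : ℂ → Matrix (Fin d) (Fin d) A) (v : ℂ) (u : Fin m → ℂ) :
    dressed d m ρ Am v u =
      Pl (fun i => v + u i + ρ) (List.finRange m) * onAW d m (Am v) *
        Pl (fun i => v - u i) ((List.finRange m).reverse) := rfl

lemma prodLambda (v ρ : ℂ) (u : Fin m → ℂ)
    (hden : ∀ i : Fin m, v + u i + ρ ≠ 0 ∧ v + u i + ρ - 1 ≠ 0 ∧
      v - u i ≠ 0 ∧ v - u i - 1 ≠ 0) :
    (∏ a : Fin m, ((v + u a - 1 + ρ) * (v - u a - 1)) / ((v + u a + ρ) * (v - u a))) *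
      (aprod (fun i => v - u i) (List.finRange m) *
        aprod (fun i => v + u i + ρ) (List.finRange m)) = 1 := by
  rw [aprod, aprod, ← Fin.prod_univ_def, ← Fin.prod_univ_def, ← Finset.prod_mul_distrib,
    ← Finset.prod_mul_distrib]
  apply Finset.prod_eq_one
  intro a _
  obtain ⟨h1, h2, h3, h4⟩ := hden a
  field_simp
  ring

variable (ρ : ℂ) (u : Fin m → ℂ) (Am : ℂ → Matrix (Fin d) (Fin d) A) (v : ℂ)

lemma hwconv (hden : ∀ i : Fin m, v + u i + ρ ≠ 0 ∧ v + u i + ρ - 1 ≠ 0 ∧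
      v - u i ≠ 0 ∧ v - u i - 1 ≠ 0) :
    ∀ i ∈ List.finRange m, (fun i => v - u i) i ≠ 0 ∧ (fun i => v - u i) i - 1 ≠ 0 ∧
      (fun i => v + u i + ρ) i ≠ 0 ∧ (fun i => v + u i + ρ) i - 1 ≠ 0 :=
  fun i _ => ⟨(hden i).2.2.1, (hden i).2.2.2, (hden i).1, (hden i).2.1⟩

lemma final1 (z : Fin d) (hA : ∀ i : Fin d, i ≠ z → Am v i z = 0)
    (hden : ∀ i : Fin m, v + u i + ρ ≠ 0 ∧ v + u i + ρ - 1 ≠ 0 ∧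
      v - u i ≠ 0 ∧ v - u i - 1 ≠ 0) :
    (entryOp d m ρ Am v u z z).mulVec
        (fun p => if p = (fun _ => z) then (1 : A) else 0)
      = fun p => Am v z z * (if p = (fun _ => z) then (1 : A) else 0) := by
  rw [entry_eq, dressed_eq,
    master_vac z (Am v) hA (fun i => v - u i) (fun i => v + u i + ρ) (List.finRange m)
      (hwconv ρ u v hden)]
  funext p
  by_cases hp : p = (fun _ => z) <;> simp [rmul, eb, Prod.mk.injEq, hp]

lemma final2 (z : Fin d) (hA : ∀ i : Fin d, i ≠ z → Am v i z = 0)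
    (hden : ∀ i : Fin m, v + u i + ρ ≠ 0 ∧ v + u i + ρ - 1 ≠ 0 ∧
      v - u i ≠ 0 ∧ v - u i - 1 ≠ 0)
    (i : Fin d) (hi : i ≠ z) :
    (entryOp d m ρ Am v u i z).mulVec
        (fun p => if p = (fun _ => z) then (1 : A) else 0) = 0 := by
  rw [entry_eq, dressed_eq,
    master_vac z (Am v) hA (fun i => v - u i) (fun i => v + u i + ρ) (List.finRange m)
      (hwconv ρ u v hden)]
  funext p
  simp [rmul, eb, Prod.mk.injEq, hi]

lemma final3 (z : Fin d) (hA : ∀ i : Fin d, i ≠ z → Am v i z = 0)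
    (hden : ∀ i : Fin m, v + u i + ρ ≠ 0 ∧ v + u i + ρ - 1 ≠ 0 ∧
      v - u i ≠ 0 ∧ v - u i - 1 ≠ 0)
    (hden2 : 2*v - 1 + ρ ≠ 0) (i j : Fin d) (hi : i ≠ z) (hj : j ≠ z) :
    (entryOp d m ρ Am v u i j).mulVec
        (fun p => if p = (fun _ => z) then (1 : A) else 0)
      = fun p =>
          (1 / ∏ a : Fin m,
              ((v + u a - 1 + ρ) * (v - u a - 1)) / ((v + u a + ρ) * (v - u a))) •
            ((Am v i j +
                (if i = j then
                  (1 - ∏ a : Fin m,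
                      ((v + u a - 1 + ρ) * (v - u a - 1)) / ((v + u a + ρ) * (v - u a)))
                    / (2*v - 1 + ρ)
                else 0) • Am v z z) *
              (if p = (fun _ => z) then (1 : A) else 0)) := by
  set w : Fin m → ℂ := fun i => v - u i with hwdef
  set w' : Fin m → ℂ := fun i => v + u i + ρ with hw'def
  set L : List (Fin m) := List.finRange m with hL
  set Λ : ℂ := ∏ a : Fin m,
    ((v + u a - 1 + ρ) * (v - u a - 1)) / ((v + u a + ρ) * (v - u a)) with hΛ
  set Q : ℂ := aprod w L * aprod w' L with hQdef
  have hΛQ : Λ * Q = 1 := prodLambda v ρ u hden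
  have hΛ0 : Λ ≠ 0 := left_ne_zero_of_mul_eq_one hΛQ
  have hQval : Q = 1 / Λ := by
    rw [eq_div_iff hΛ0]; linear_combination hΛQ
  have hScc : Sc w w' L * (2*v - 1 + ρ) = Q - 1 := by
    rw [hQdef]
    exact Sc_eq (2*v - 1 + ρ) w w' L
      (fun i _ => ⟨(hden i).2.2.2, (hden i).2.1, by rw [hwdef, hw'def]; ring⟩)
  have hSval : Sc w w' L = (1 / Λ) * ((1 - Λ) / (2*v - 1 + ρ)) := by
    field_simp
    linear_combination Λ * hScc + hΛQ
  obtain ⟨E, hEs, hE⟩ := master z j hj (Am v) hA w w' L (by rw [hL]; exact List.nodup_finRange m)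
    (hwconv ρ u v hden)
  rw [entry_eq, dressed_eq]
  funext p
  rw [← hw'def, ← hwdef, ← hL]
  rw [hE]
  simp only [Pi.add_apply, Pi.smul_apply]
  have hTval : (∑ k ∈ Finset.univ \ {z}, rmul (eb (A := A) (k, fun _ => z)) (Am v k j)) (i, p)
      = (if p = (fun _ => z) then (1 : A) else 0) * Am v i j := by
    rw [Finset.sum_apply,
      Finset.sum_eq_single_of_mem i (by simp [hi])
        (fun k _ hk => by simp [rmul, eb, Prod.mk.injEq, show ¬ i = k from fun h => hk h.symm])]
    by_cases hp : p = (fun _ => z) <;> simp [rmul, eb, Prod.mk.injEq, hp]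
  have hV0val : rmul (eb (A := A) (z, fun _ => z)) (Am v z j) (i, p) = 0 := by
    simp [rmul, eb, Prod.mk.injEq, hi]
  have hV1val : rmul (eb (A := A) (j, fun _ => z)) (Am v z z) (i, p)
      = (if i = j then (1 : A) else 0) * ((if p = (fun _ => z) then (1 : A) else 0) * Am v z z) := by
    by_cases hij : i = j <;> by_cases hp : p = (fun _ => z) <;>
      simp [rmul, eb, Prod.mk.injEq, hij, hp]
  have hEval : E (i, p) = 0 := by
    by_contra h
    exact hi (hEs i p h).1
  rw [hTval, hV0val, hV1val, hEval, ← hQdef, hQval, hSval]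
  by_cases hij : i = j <;> by_cases hp : p = (fun _ => z) <;>
    simp only [hij, hp, if_true, if_false, one_mul, mul_one, mul_zero, zero_mul, smul_zero,
      add_zero, zero_smul, zero_add, smul_add, smul_smul, mul_zero] <;>
    first
      | rfl
      | (simp [smul_add, smul_smul, mul_add, add_mul]; try ring_nf)

end Proof

theorem statement13 (d m : ℕ) (hd : 2 ≤ d) (hm : 1 ≤ m)
    {A : Type*} [Ring A] [Algebra ℂ A]
    (ρ : ℂ) (u : Fin m → ℂ) (Am : ℂ → Matrix (Fin d) (Fin d) A) (v : ℂ)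
    -- the first column of A(v) vanishes below the (1,1) entry
    (hA : ∀ i : Fin d, i ≠ ⟨0, by omega⟩ → Am v i ⟨0, by omega⟩ = 0)
    (hden : ∀ i : Fin m, v + u i + ρ ≠ 0 ∧ v + u i + ρ - 1 ≠ 0 ∧
      v - u i ≠ 0 ∧ v - u i - 1 ≠ 0)
    (hden2 : 2*v - 1 + ρ ≠ 0) :
    -- [A_{ab}(v;u)]₁₁ ξ = [A(v)]₁₁ ξ
    ((entryOp d m ρ Am v u ⟨0, by omega⟩ ⟨0, by omega⟩).mulVec
        (fun p => if p = (fun _ => (⟨0, by omega⟩ : Fin d)) then (1 : A) else 0)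
      = fun p =>
          Am v ⟨0, by omega⟩ ⟨0, by omega⟩ *
            (if p = (fun _ => (⟨0, by omega⟩ : Fin d)) then (1 : A) else 0))
    ∧
    -- [A_{ab}(v;u)]_{1+i,1} ξ = 0
    (∀ i : Fin d, i ≠ ⟨0, by omega⟩ →
      (entryOp d m ρ Am v u i ⟨0, by omega⟩).mulVec
          (fun p => if p = (fun _ => (⟨0, by omega⟩ : Fin d)) then (1 : A) else 0)
        = 0)
    ∧
    -- [A_{ab}(v;u)]_{1+i,1+j} ξ = (1/Λ⁻)([A(v)]_{1+i,1+j} + δ_{ij}((1-Λ⁻)/(2v-1+ρ))[A(v)]₁₁) ξ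
    (∀ i j : Fin d, i ≠ ⟨0, by omega⟩ → j ≠ ⟨0, by omega⟩ →
      (entryOp d m ρ Am v u i j).mulVec
          (fun p => if p = (fun _ => (⟨0, by omega⟩ : Fin d)) then (1 : A) else 0)
        = fun p =>
            (1 / ∏ a : Fin m,
                ((v + u a - 1 + ρ) * (v - u a - 1)) / ((v + u a + ρ) * (v - u a))) •
              ((Am v i j +
                  (if i = j then
                    (1 - ∏ a : Fin m,
                        ((v + u a - 1 + ρ) * (v - u a - 1)) / ((v + u a + ρ) * (v - u a)))
                      / (2*v - 1 + ρ)
                  else 0) • Am v ⟨0, by omega⟩ ⟨0, by omega⟩) *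
                (if p = (fun _ => (⟨0, by omega⟩ : Fin d)) then (1 : A) else 0))) := by
  exact ⟨final1 ρ u Am v _ hA hden,
    fun i hi => final2 ρ u Am v _ hA hden i hi,
    fun i j hi hj => final3 ρ u Am v _ hA hden hden2 i j hi hj⟩
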